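/- Let K : [0,1]×[0,1] → ℝ^{2×2} be measurable with ∫₀¹∫₀¹ ‖K(s,θ)‖² dθ ds < ∞, and let M := diag(0,1) ∈ ℝ^{2×2}. Then there is no ε > 0 such that ∫₀¹ v(s)ᵀ M v(s) ds + ∫₀¹∫₀¹ v(s)ᵀ K(s,θ) v(θ) dθ ds ≥ ε ∫₀¹ ‖v(s)‖² ds for all square-integrable v : (0,1) → ℝ². -/

import Mathlib

open scoped Matrix
open MeasureTheory Set Filter

private lemma shrink_aux (F : ℝ × ℝ → ℝ)
    (hFint : IntegrableOn F (Set.Ioo (0:ℝ) 1 ×ˢ Set.Ioo (0:ℝ) 1)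
      ((volume : Measure ℝ).prod volume)) (ε : ℝ) (hε : 0 < ε) :
    ∃ δ : ℝ, 0 < δ ∧ δ ≤ 1 ∧
      (∫ p in Set.Ioo (0:ℝ) δ ×ˢ Set.Ioo (0:ℝ) δ, F p ∂((volume : Measure ℝ).prod volume)) < ε^2 := by
  set μ := (volume : Measure ℝ)
  set s : ℕ → Set (ℝ × ℝ) := fun n => Set.Ioo (0:ℝ) (1/(n+1)) ×ˢ Set.Ioo (0:ℝ) (1/(n+1)) with hs
  have hanti : Antitone s := by
    intro m n hmn
    have : (1:ℝ)/(n+1) ≤ 1/(m+1) := by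
      apply one_div_le_one_div_of_le <;> [positivity; exact_mod_cast by omega]
    exact Set.prod_mono (Set.Ioo_subset_Ioo le_rfl this) (Set.Ioo_subset_Ioo le_rfl this)
  have hsub : ∀ n, s n ⊆ Set.Ioo (0:ℝ) 1 ×ˢ Set.Ioo (0:ℝ) 1 := by
    intro n
    have : (1:ℝ)/(n+1) ≤ 1 := by
      rw [div_le_one (by positivity)]; linarith [Nat.cast_nonneg (α := ℝ) n]
    exact Set.prod_mono (Set.Ioo_subset_Ioo le_rfl this) (Set.Ioo_subset_Ioo le_rfl this)
  have hmeas : ∀ n, MeasurableSet (s n) := fun n => (measurableSet_Ioo).prod measurableSet_Ioo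
  have hint : ⋂ n, s n = ∅ := by
    ext p
    simp only [Set.mem_iInter, Set.mem_empty_iff_false, iff_false]
    intro h
    obtain ⟨n, hn⟩ := exists_nat_one_div_lt (h 0).1.1
    exact absurd (h n).1.2 (not_lt.mpr hn.le)
  have htend := tendsto_setIntegral_of_antitone (μ := μ.prod μ) (f := F) hmeas hanti
    ⟨0, hFint.mono_set (hsub 0)⟩
  rw [hint] at htend
  simp only [Measure.restrict_empty, integral_zero_measure] at htend
  obtain ⟨n, hn⟩ :=
    (htend.eventually (eventually_lt_nhds (show (0:ℝ) < ε^2 by positivity))).exists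
  refine ⟨1/(n+1), by positivity, ?_, hn⟩
  rw [div_le_one (by positivity)]; linarith [Nat.cast_nonneg (α := ℝ) n]

/-- the paper's wave-equation ill-posedness argument: an operator
`Q v = M v + ∫ K(·,θ) v(θ) dθ` whose multiplier part `M = diag(0,1)` annihilates the first
component cannot satisfy the coercivity condition `Q ⪰ εI` on `L²((0,1); ℝ²)`, for any
square-integrable (Hilbert–Schmidt) kernel `K`. -/
theorem degenerate_multiplier_plus_HS_kernel_not_coercive
    (K : ℝ → ℝ → Matrix (Fin 2) (Fin 2) ℝ)
    (hKmeas : ∀ i j : Fin 2, Measurable fun p : ℝ × ℝ => K p.1 p.2 i j)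
    (hKL2 : MeasureTheory.IntegrableOn
      (fun p : ℝ × ℝ => ∑ i : Fin 2, ∑ j : Fin 2, (K p.1 p.2 i j) ^ 2)
      (Set.Ioo (0:ℝ) 1 ×ˢ Set.Ioo (0:ℝ) 1))
    (M : Matrix (Fin 2) (Fin 2) ℝ) (hM : M = Matrix.diagonal ![0, 1]) :
    ¬∃ ε > (0:ℝ), ∀ v : ℝ → Fin 2 → ℝ, Measurable v →
      MeasureTheory.IntegrableOn (fun s => ∑ i : Fin 2, (v s i) ^ 2) (Set.Ioo 0 1) →
      ε * ∫ s in (0:ℝ)..1, ∑ i : Fin 2, (v s i) ^ 2 ≤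
        (∫ s in (0:ℝ)..1, dotProduct (v s) (M.mulVec (v s)))
          + ∫ s in (0:ℝ)..1, ∫ θ in (0:ℝ)..1, dotProduct (v s) ((K s θ).mulVec (v θ)) := by
  rintro ⟨ε, hε, hcoer⟩
  set μ := (volume : Measure ℝ) with hμ
  -- the (0,0) entry squared
  set F : ℝ × ℝ → ℝ := fun p => (K p.1 p.2 0 0) ^ 2 with hFdef
  have hFmeas : Measurable F := (hKmeas 0 0).pow_const 2
  have hFint : IntegrableOn F (Set.Ioo (0:ℝ) 1 ×ˢ Set.Ioo (0:ℝ) 1) (μ.prod μ) := by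
    refine Integrable.mono' hKL2 hFmeas.aestronglyMeasurable ?_
    filter_upwards with p
    rw [Real.norm_eq_abs, abs_of_nonneg (sq_nonneg _)]
    have h01 : F p ≤ ∑ j : Fin 2, (K p.1 p.2 0 j)^2 := by
      simp [Fin.sum_univ_two, hFdef, sq_nonneg (K p.1 p.2 0 1)]
    refine h01.trans ?_
    simp only [Fin.sum_univ_two]
    have := sq_nonneg (K p.1 p.2 1 0); have := sq_nonneg (K p.1 p.2 1 1); linarith
  obtain ⟨δ, hδ0, hδ1, hg⟩ := shrink_aux F hFint ε hε
  set A : Set (ℝ × ℝ) := Set.Ioo (0:ℝ) δ ×ˢ Set.Ioo (0:ℝ) δ with hA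
  have hAsub : A ⊆ Set.Ioo (0:ℝ) 1 ×ˢ Set.Ioo (0:ℝ) 1 :=
    Set.prod_mono (Set.Ioo_subset_Ioo le_rfl hδ1) (Set.Ioo_subset_Ioo le_rfl hδ1)
  have hAmeas : MeasurableSet A := measurableSet_Ioo.prod measurableSet_Ioo
  have hAvol : (μ.prod μ) A = ENNReal.ofReal δ * ENNReal.ofReal δ := by
    rw [hA, Measure.prod_prod, Real.volume_Ioo, sub_zero]
  have hAfin : (μ.prod μ) A < ⊤ := by
    rw [hAvol]; exact ENNReal.mul_lt_top ENNReal.ofReal_lt_top ENNReal.ofReal_lt_top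
  -- integrability of K00 on A
  have hFintA : IntegrableOn F A (μ.prod μ) := hFint.mono_set hAsub
  have hK00int : IntegrableOn (fun p : ℝ × ℝ => K p.1 p.2 0 0) A (μ.prod μ) := by
    refine Integrable.mono' (g := fun p => (F p + 1) / 2)
      ((hFintA.add (integrableOn_const hAfin.ne)).div_const 2)
      (hKmeas 0 0).aestronglyMeasurable ?_
    filter_upwards with p
    rw [Real.norm_eq_abs]
    simp only [hFdef]
    nlinarith [sq_nonneg (|K p.1 p.2 0 0| - 1), abs_nonneg (K p.1 p.2 0 0), sq_abs (K p.1 p.2 0 0)]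
  -- the test function
  set v : ℝ → Fin 2 → ℝ :=
    fun s i => if i = 0 then (if s ∈ Set.Ioo (0:ℝ) δ then (1:ℝ) else 0) else 0 with hv
  have hvmeas : Measurable v := by
    rw [measurable_pi_iff]
    intro i
    by_cases h : i = 0
    · simp only [hv, h, if_true]
      exact Measurable.ite measurableSet_Ioo measurable_const measurable_const
    · simp only [hv, h, if_false]
      exact measurable_const
  have hsum : ∀ s, (∑ i : Fin 2, (v s i) ^ 2) = Set.indicator (Set.Ioo (0:ℝ) δ) 1 s := by
    intro s
    have h10 : ((1:Fin 2) = 0) = False := by simp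
    simp only [hv, Fin.sum_univ_two, Set.indicator_apply, Pi.one_apply, h10, if_true, if_false,
      eq_self_iff_true]
    split_ifs <;> norm_num
  have hvint : IntegrableOn (fun s => ∑ i : Fin 2, (v s i) ^ 2) (Set.Ioo 0 1) := by
    refine Integrable.mono' (g := fun _ => (1:ℝ))
      (integrableOn_const (by rw [Real.volume_Ioo]; exact ENNReal.ofReal_lt_top.ne)) ?_ ?_
    · refine (Measurable.aestronglyMeasurable ?_)
      exact Finset.measurable_sum _ fun i _ => ((hvmeas.eval).pow_const 2)
    · filter_upwards with s
      rw [hsum, Real.norm_eq_abs, Set.indicator_apply]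
      split_ifs <;> norm_num
  -- LHS integral = δ
  have hL : (∫ s in (0:ℝ)..1, ∑ i : Fin 2, (v s i) ^ 2) = δ := by
    rw [intervalIntegral.integral_of_le zero_le_one, integral_Ioc_eq_integral_Ioo]
    simp_rw [hsum]
    rw [setIntegral_indicator measurableSet_Ioo,
      Set.inter_eq_self_of_subset_right (Set.Ioo_subset_Ioo le_rfl hδ1)]
    simp [Real.volume_Ioo, ENNReal.toReal_ofReal hδ0.le, hδ0.le]
  -- M term = 0
  have hMterm : (∫ s in (0:ℝ)..1, dotProduct (v s) (M.mulVec (v s))) = 0 := by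
    have : ∀ s, dotProduct (v s) (M.mulVec (v s)) = 0 := by
      intro s
      subst hM
      simp [hv, dotProduct, Matrix.mulVec_diagonal, Fin.sum_univ_two]
    simp only [this, intervalIntegral.integral_const, smul_zero]
  -- kernel integrand
  have hker : ∀ s θ, dotProduct (v s) ((K s θ).mulVec (v θ)) =
      (if s ∈ Set.Ioo (0:ℝ) δ then (1:ℝ) else 0) *
        ((if θ ∈ Set.Ioo (0:ℝ) δ then (1:ℝ) else 0) * K s θ 0 0) := by
    intro s θ
    simp [hv, dotProduct, Matrix.mulVec, Fin.sum_univ_two]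
  -- kernel term equals product-set integral
  have hKterm : (∫ s in (0:ℝ)..1, ∫ θ in (0:ℝ)..1,
      dotProduct (v s) ((K s θ).mulVec (v θ)))
      = ∫ p in A, K p.1 p.2 0 0 ∂(μ.prod μ) := by
    rw [setIntegral_prod _ hK00int]
    rw [intervalIntegral.integral_of_le zero_le_one, integral_Ioc_eq_integral_Ioo]
    have hinner : ∀ s, (∫ θ in (0:ℝ)..1, dotProduct (v s) ((K s θ).mulVec (v θ)))
        = Set.indicator (Set.Ioo (0:ℝ) δ) (fun s' => ∫ θ in Set.Ioo (0:ℝ) δ, K s' θ 0 0 ∂μ) s := by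
      intro s
      rw [intervalIntegral.integral_of_le zero_le_one, integral_Ioc_eq_integral_Ioo]
      simp_rw [hker]
      rw [integral_const_mul]
      have : ∀ θ, (if θ ∈ Set.Ioo (0:ℝ) δ then (1:ℝ) else 0) * K s θ 0 0
          = Set.indicator (Set.Ioo (0:ℝ) δ) (fun θ => K s θ 0 0) θ := by
        intro θ; rw [Set.indicator_apply]; split_ifs <;> simp
      simp_rw [this]
      rw [setIntegral_indicator measurableSet_Ioo,
        Set.inter_eq_self_of_subset_right (Set.Ioo_subset_Ioo le_rfl hδ1)]
      rw [Set.indicator_apply]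
      split_ifs <;> simp [hμ]
    simp_rw [hinner]
    rw [setIntegral_indicator measurableSet_Ioo,
      Set.inter_eq_self_of_subset_right (Set.Ioo_subset_Ioo le_rfl hδ1)]
  -- bound the kernel term
  have hbound : (∫ p in A, K p.1 p.2 0 0 ∂(μ.prod μ)) < ε * δ := by
    have h1 : (∫ p in A, K p.1 p.2 0 0 ∂(μ.prod μ))
        ≤ ∫ p in A, (δ/(2*ε)) * F p + ε/(2*δ) ∂(μ.prod μ) := by
      refine integral_mono hK00int ((hFintA.const_mul _).add
        (integrableOn_const hAfin.ne)) ?_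
      intro p
      simp only [Pi.add_apply, hFdef]
      rw [div_mul_eq_mul_div, div_add_div _ _ (by positivity) (by positivity),
        le_div_iff₀ (by positivity)]
      nlinarith [sq_nonneg (δ * K p.1 p.2 0 0 - ε), sq_nonneg (K p.1 p.2 0 0), hε, hδ0,
        mul_pos hε hδ0]
    have h2 : (∫ p in A, (δ/(2*ε)) * F p + ε/(2*δ) ∂(μ.prod μ))
        = (δ/(2*ε)) * (∫ p in A, F p ∂(μ.prod μ)) + (ε/(2*δ)) * (δ * δ) := by
      rw [integral_add (hFintA.const_mul _) (integrableOn_const hAfin.ne),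
        integral_const_mul, setIntegral_const, measureReal_def, hAvol, smul_eq_mul]
      rw [ENNReal.toReal_mul, ENNReal.toReal_ofReal hδ0.le]
      ring
    have h3 : (δ/(2*ε)) * (∫ p in A, F p ∂(μ.prod μ)) < (δ/(2*ε)) * ε^2 :=
      mul_lt_mul_of_pos_left hg (by positivity)
    have h4 : (δ/(2*ε)) * ε^2 = ε*δ/2 := by field_simp
    have h5 : (ε/(2*δ)) * (δ * δ) = ε*δ/2 := by field_simp
    calc (∫ p in A, K p.1 p.2 0 0 ∂(μ.prod μ))
        ≤ (δ/(2*ε)) * (∫ p in A, F p ∂(μ.prod μ)) + (ε/(2*δ)) * (δ * δ) := by rw [← h2]; exact h1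
      _ < ε*δ/2 + ε*δ/2 := by rw [h5]; have := h4 ▸ h3; linarith
      _ = ε * δ := by ring
  have := hcoer v hvmeas hvint
  rw [hL, hMterm, hKterm, zero_add] at this
  linarith
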